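/- For finite subsets of a finite metric space: if S, P are subsets of a ground set V with |S| = |P|, then the min-cost matching distance between S and P equals the min-cost matching distance between their complements, i.e., dist(S, P) = dist(V∖S, V∖P). -/

import Mathlib

/-- Min-cost perfect matching (earth-mover) distance between two finite sets of
points of a metric space, as an infimum over bijections. -/
noncomputable def mdist {α : Type*} [MetricSpace α] (s t : Finset α) : ℝ :=
  sInf {c | ∃ f : α → α, Set.BijOn f ↑s ↑t ∧ c = ∑ x ∈ s, dist x (f x)}

set_option linter.unusedSectionVars false

section Aux
variable {α : Type*} [MetricSpace α] [DecidableEq α]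

/-- the cost set -/
private def cset (s t : Finset α) : Set ℝ :=
  {c | ∃ f : α → α, Set.BijOn f ↑s ↑t ∧ c = ∑ x ∈ s, dist x (f x)}

private lemma cset_bddBelow (s t : Finset α) : BddBelow (cset s t) := by
  refine ⟨0, fun c hc => ?_⟩
  obtain ⟨f, -, rfl⟩ := hc
  exact Finset.sum_nonneg fun x _ => dist_nonneg

private lemma cset_nonempty {s t : Finset α} (h : s.card = t.card) :
    (cset s t).Nonempty := by
  classical
  let e := Finset.equivOfCardEq h
  refine ⟨_, fun x => if hx : x ∈ s then (e ⟨x, hx⟩ : α) else x, ?_, rfl⟩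
  refine ⟨?_, ?_, ?_⟩
  · intro x hx
    simp only [Finset.mem_coe] at hx
    simp only [hx, dif_pos]
    exact (e ⟨x, hx⟩).2
  · intro x hx y hy hxy
    simp only [Finset.mem_coe] at hx hy
    simp only [hx, hy, dif_pos] at hxy
    have := e.injective (Subtype.ext hxy)
    exact congrArg Subtype.val this
  · intro y hy
    simp only [Finset.mem_coe] at hy
    refine ⟨(e.symm ⟨y, hy⟩ : α), by simp, ?_⟩
    have hm : (e.symm ⟨y, hy⟩ : α) ∈ s := (e.symm ⟨y, hy⟩).2
    simp only [hm, dif_pos]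
    simp

/-- a swap inside `s` is a bijection of `s` onto itself -/
private lemma swap_bijOn {a b : α} {s : Finset α} (ha : a ∈ s) (hb : b ∈ s) :
    Set.BijOn (Equiv.swap a b) ↑s ↑s := by
  refine ⟨?_, (Equiv.swap a b).injective.injOn, ?_⟩
  · intro x hx
    rcases eq_or_ne x a with rfl | hxa
    · simpa [Equiv.swap_apply_left] using hb
    rcases eq_or_ne x b with rfl | hxb
    · simpa [Equiv.swap_apply_right] using ha
    · simpa [Equiv.swap_apply_of_ne_of_ne hxa hxb] using hx
  · intro y hy
    refine ⟨Equiv.swap a b y, ?_, by simp⟩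
    rcases eq_or_ne y a with rfl | hya
    · simpa [Equiv.swap_apply_left] using hb
    rcases eq_or_ne y b with rfl | hyb
    · simpa [Equiv.swap_apply_right] using ha
    · simpa [Equiv.swap_apply_of_ne_of_ne hya hyb] using hy

/-- precomposing with a swap that sends `a` to its preimage does not increase cost -/
private lemma swap_cost {s : Finset α} {f : α → α} {a b : α}
    (ha : a ∈ s) (hb : b ∈ s) (hab : a ≠ b) (hfb : f b = a) :
    ∑ x ∈ s, dist x (f (Equiv.swap a b x)) ≤ ∑ x ∈ s, dist x (f x) := by
  have hbe : b ∈ s.erase a := Finset.mem_erase.2 ⟨fun h => hab h.symm, hb⟩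
  have key : ∀ g : α → ℝ, ∑ x ∈ s, g x = g a + (g b + ∑ x ∈ (s.erase a).erase b, g x) := by
    intro g
    rw [Finset.add_sum_erase _ g hbe, Finset.add_sum_erase _ g ha]
  rw [key (fun x => dist x (f (Equiv.swap a b x))), key (fun x => dist x (f x))]
  have h1 : ∀ x ∈ (s.erase a).erase b, dist x (f (Equiv.swap a b x)) = dist x (f x) := by
    intro x hx
    rw [Finset.mem_erase, Finset.mem_erase] at hx
    rw [Equiv.swap_apply_of_ne_of_ne hx.2.1 hx.1]
  rw [Finset.sum_congr rfl h1]
  have : dist a (f (Equiv.swap a b a)) + dist b (f (Equiv.swap a b b))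
      ≤ dist a (f a) + dist b (f b) := by
    rw [Equiv.swap_apply_left, Equiv.swap_apply_right, hfb, dist_self, zero_add]
    have h2 := dist_triangle b a (f a)
    linarith
  linarith

/-- Exchange argument: any matching of `s` with `t` can be improved to a matching
of `s \ t` with `t \ s` of no greater cost. -/
private lemma exchange : ∀ (n : ℕ) (s t : Finset α) (f : α → α), (s ∩ t).card ≤ n →
    Set.BijOn f ↑s ↑t →
    ∃ g, Set.BijOn g ↑(s \ t) ↑(t \ s) ∧
      ∑ x ∈ s \ t, dist x (g x) ≤ ∑ x ∈ s, dist x (f x) := by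
  intro n
  induction n with
  | zero =>
    intro s t f hcard hf
    have hd : Disjoint s t := by
      rw [Finset.disjoint_iff_inter_eq_empty]
      exact Finset.card_eq_zero.1 (Nat.le_zero.1 hcard)
    rw [Finset.sdiff_eq_self_of_disjoint hd, Finset.sdiff_eq_self_of_disjoint hd.symm]
    exact ⟨f, hf, le_refl _⟩
  | succ n ih =>
    intro s t f hcard hf
    rcases Nat.lt_or_ge (s ∩ t).card (n + 1) with hlt | hge
    · exact ih s t f (Nat.lt_succ_iff.1 hlt) hf
    -- pick a common point a
    have hpos : 0 < (s ∩ t).card := by omega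
    obtain ⟨a, hain⟩ := Finset.card_pos.1 hpos
    have has : a ∈ s := (Finset.mem_inter.1 hain).1
    have hat : a ∈ t := (Finset.mem_inter.1 hain).2
    -- build f' fixing a with no larger cost
    obtain ⟨f', hf', hf'a, hcost⟩ :
        ∃ f' : α → α, Set.BijOn f' ↑s ↑t ∧ f' a = a ∧
          ∑ x ∈ s, dist x (f' x) ≤ ∑ x ∈ s, dist x (f x) := by
      rcases eq_or_ne (f a) a with hfa | hfa
      · exact ⟨f, hf, hfa, le_refl _⟩
      · obtain ⟨b, hbs, hfb⟩ := hf.surjOn (by simpa using hat)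
        simp only [Finset.mem_coe] at hbs
        have hab : a ≠ b := fun h => hfa (h ▸ hfb)
        refine ⟨f ∘ Equiv.swap a b, hf.comp (swap_bijOn has hbs), ?_, ?_⟩
        · simp [Equiv.swap_apply_left, hfb]
        · exact swap_cost has hbs hab hfb
    -- restrict to erased sets
    have hbij : Set.BijOn f' ↑(s.erase a) ↑(t.erase a) := by
      rw [Finset.coe_erase, Finset.coe_erase]
      refine ⟨?_, hf'.injOn.mono Set.diff_subset, ?_⟩
      · rintro x ⟨hx, hxa⟩
        refine ⟨hf'.mapsTo hx, ?_⟩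
        simp only [Set.mem_singleton_iff] at hxa ⊢
        intro hcontra
        exact hxa (hf'.injOn hx (by simpa using has) (by rw [hcontra, hf'a]))
      · rintro y ⟨hy, hya⟩
        obtain ⟨x, hx, rfl⟩ := hf'.surjOn hy
        refine ⟨x, ⟨hx, ?_⟩, rfl⟩
        simp only [Set.mem_singleton_iff] at hya ⊢
        intro hcontra
        exact hya (by rw [hcontra, hf'a])
    have hint : (s.erase a ∩ t.erase a) = (s ∩ t).erase a := by
      ext x; simp [Finset.mem_erase, Finset.mem_inter]; tauto
    have hcard' : (s.erase a ∩ t.erase a).card ≤ n := by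
      rw [hint, Finset.card_erase_of_mem hain]; omega
    have hsd : s.erase a \ t.erase a = s \ t := by
      ext x
      simp only [Finset.mem_sdiff, Finset.mem_erase]
      constructor
      · rintro ⟨⟨hxa, hxs⟩, hnt⟩
        exact ⟨hxs, fun hxt => hnt ⟨hxa, hxt⟩⟩
      · rintro ⟨hxs, hxt⟩
        exact ⟨⟨fun h => hxt (h ▸ hat), hxs⟩, fun h => hxt h.2⟩
    have htd : t.erase a \ s.erase a = t \ s := by
      ext x
      simp only [Finset.mem_sdiff, Finset.mem_erase]
      constructor
      · rintro ⟨⟨hxa, hxs⟩, hnt⟩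
        exact ⟨hxs, fun hxt => hnt ⟨hxa, hxt⟩⟩
      · rintro ⟨hxs, hxt⟩
        exact ⟨⟨fun h => hxt (h ▸ has), hxs⟩, fun h => hxt h.2⟩
    obtain ⟨g, hg, hgcost⟩ := ih (s.erase a) (t.erase a) f' hcard' hbij
    rw [hsd, htd] at hg
    rw [hsd] at hgcost
    refine ⟨g, hg, hgcost.trans ?_⟩
    calc ∑ x ∈ s.erase a, dist x (f' x)
        = dist a (f' a) + ∑ x ∈ s.erase a, dist x (f' x) := by
          rw [hf'a, dist_self, zero_add]
      _ = ∑ x ∈ s, dist x (f' x) := Finset.add_sum_erase _ (fun x => dist x (f' x)) has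
      _ ≤ ∑ x ∈ s, dist x (f x) := hcost

private lemma mdist_eq (s t : Finset α) : mdist s t = sInf (cset s t) := rfl

/-- extending a matching of the differences by the identity -/
private lemma ext_mem {s t : Finset α} {c : ℝ} (hc : c ∈ cset (s \ t) (t \ s)) :
    c ∈ cset s t := by
  obtain ⟨g, hg, rfl⟩ := hc
  refine ⟨fun x => if x ∈ s \ t then g x else x, ⟨?_, ?_, ?_⟩, ?_⟩
  · intro x hx
    simp only [Finset.mem_coe] at hx
    by_cases hxd : x ∈ s \ t
    · simp only [hxd, if_pos]
      have := hg.mapsTo (by simpa using hxd)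
      simp only [Finset.coe_sdiff, Set.mem_diff, Finset.mem_coe] at this
      exact this.1
    · simp only [hxd, if_neg]
      simp only [Finset.mem_sdiff, not_and, not_not] at hxd
      exact hxd hx
  · intro x hx y hy hxy
    simp only [Finset.mem_coe] at hx hy
    by_cases hxd : x ∈ s \ t <;> by_cases hyd : y ∈ s \ t <;>
      simp only [hxd, hyd, if_pos, if_neg, if_true, if_false] at hxy
    · exact hg.injOn (by simpa using hxd) (by simpa using hyd) hxy
    · exfalso
      have := hg.mapsTo (x := x) (by simpa using hxd)
      rw [hxy] at this
      simp only [Finset.coe_sdiff, Set.mem_diff, Finset.mem_coe] at this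
      simp only [Finset.mem_sdiff, not_and, not_not] at hyd
      exact this.2 hy
    · exfalso
      have := hg.mapsTo (x := y) (by simpa using hyd)
      rw [← hxy] at this
      simp only [Finset.coe_sdiff, Set.mem_diff, Finset.mem_coe] at this
      simp only [Finset.mem_sdiff, not_and, not_not] at hxd
      exact this.2 hx
    · exact hxy
  · intro y hy
    simp only [Finset.mem_coe] at hy
    by_cases hyd : y ∈ t \ s
    · obtain ⟨x, hx, rfl⟩ := hg.surjOn (by simpa using hyd)
      simp only [Finset.coe_sdiff, Set.mem_diff, Finset.mem_coe] at hx
      have hxd : x ∈ s \ t := Finset.mem_sdiff.2 hx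
      exact ⟨x, by simpa using hx.1, by simp [hxd]⟩
    · have hys : y ∈ s := by
        simp only [Finset.mem_sdiff, not_and, not_not] at hyd
        exact hyd hy
      have : y ∉ s \ t := fun h => (Finset.mem_sdiff.1 h).2 hy
      exact ⟨y, by simpa using hys, by simp [this]⟩
  · have e1 : ∑ x ∈ s \ t, dist x (g x)
        = ∑ x ∈ s \ t, dist x (if x ∈ s \ t then g x else x) :=
      Finset.sum_congr rfl (fun x hx => by simp [hx])
    rw [e1]
    exact Finset.sum_subset Finset.sdiff_subset (fun x hx hnx => by simp [hnx])

private lemma cset_symm (s t : Finset α) : cset s t ⊆ cset t s := by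
  rintro c ⟨f, hf, rfl⟩
  rcases isEmpty_or_nonempty α with he | hne
  · have hs : s = ∅ := Finset.eq_empty_of_isEmpty s
    have ht : t = ∅ := Finset.eq_empty_of_isEmpty t
    subst hs; subst ht
    exact ⟨f, by simpa using hf, by simp⟩
  have hinv := Set.BijOn.invOn_invFunOn hf
  refine ⟨Function.invFunOn f ↑s, ?_, ?_⟩
  · have hmap : Set.MapsTo (Function.invFunOn f ↑s) ↑t ↑s := by
      intro y hy
      obtain ⟨x, hx, rfl⟩ := hf.surjOn hy
      exact Function.invFunOn_mem ⟨x, hx, rfl⟩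
    exact (Set.InvOn.symm hinv).bijOn hmap hf.mapsTo
  · refine Finset.sum_bij (fun x _ => f x) ?_ ?_ ?_ ?_
    · intro a ha
      simpa using hf.mapsTo (by simpa using ha)
    · intro a ha b hb hab
      exact hf.injOn (by simpa using ha) (by simpa using hb) hab
    · intro b hb
      obtain ⟨x, hx, rfl⟩ := hf.surjOn (by simpa using hb)
      exact ⟨x, by simpa using hx, rfl⟩
    · intro a ha
      have : Function.invFunOn f ↑s (f a) = a := hinv.1 (by simpa using ha)
      rw [this, dist_comm]

private lemma mdist_symm (s t : Finset α) : mdist s t = mdist t s := by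
  rw [mdist_eq, mdist_eq]
  congr 1
  exact Set.Subset.antisymm (cset_symm s t) (cset_symm t s)

private lemma mdist_eq_sdiff {s t : Finset α} (h : s.card = t.card) :
    mdist s t = mdist (s \ t) (t \ s) := by
  have hcd : (s \ t).card = (t \ s).card := by
    have h1 := Finset.card_sdiff_add_card_inter s t
    have h2 := Finset.card_sdiff_add_card_inter t s
    rw [Finset.inter_comm] at h2
    omega
  rw [mdist_eq, mdist_eq]
  apply le_antisymm
  · exact csInf_le_csInf (cset_bddBelow s t) (cset_nonempty hcd) (fun c hc => ext_mem hc)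
  · apply le_csInf (cset_nonempty h)
    rintro c ⟨f, hf, rfl⟩
    obtain ⟨g, hg, hgc⟩ := exchange (s ∩ t).card s t f le_rfl hf
    exact le_trans (csInf_le (cset_bddBelow _ _) ⟨g, hg, rfl⟩) hgc

end Aux

/-- **Complement identity for the matching distance.** For subsets `S, P` of a
finite metric space `V` with `|S| = |P|`, the min-cost matching distance between
`S` and `P` equals that between their complements. -/
theorem mdist_compl {α : Type*} [Fintype α] [MetricSpace α] [DecidableEq α]
    (S P : Finset α) (h : S.card = P.card) :
    mdist S P = mdist Sᶜ Pᶜ := by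
  have hc : Sᶜ.card = Pᶜ.card := by
    rw [Finset.card_compl, Finset.card_compl, h]
  rw [mdist_eq_sdiff h, mdist_eq_sdiff hc, compl_sdiff_compl, compl_sdiff_compl]
  exact mdist_symm _ _
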